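/- Let d ≥ 2, λ > 0, and let φ : ℝ^{d−1} → ℝ^d be a linear isometry whose range is V = {x ∈ ℝ^d : ∑ x_i = 0}. Define F : ℝ^{d−1} × ℝ → ℝ^d by F(v, h) := (λ^{−1/d} e^h e^{φ(v)_1}, …, λ^{−1/d} e^h e^{φ(v)_d}). Then the pushforward under F of the measure on ℝ^{d−1} × ℝ with density (v, h) ↦ √d · e^{dh} with respect to Lebesgue measure equals λ times Lebesgue measure on ℝ^d restricted to (0,∞)^d. -/

import Mathlib

open MeasureTheory Real

lemma aux_map_withDensity {α β : Type*} [MeasurableSpace α] [MeasurableSpace β]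
    (e : α ≃ᵐ β) (μ : Measure α) (g : β → ENNReal) (hg : Measurable g) :
    Measure.map e (μ.withDensity (fun a => g (e a))) = (Measure.map e μ).withDensity g := by
  ext s hs
  rw [Measure.map_apply e.measurable hs, withDensity_apply _ (e.measurable hs),
      withDensity_apply _ hs, MeasureTheory.setLIntegral_map hs hg e.measurable]

noncomputable section
namespace S14
abbrev E (m : ℕ) := EuclideanSpace ℝ (Fin m)

variable (n : ℕ)

def ones : E (n+1) := WithLp.toLp 2 (fun _ => 1)

def tailL : E (n+1) →ₗ[ℝ] E n where
  toFun x := WithLp.toLp 2 (fun j : Fin n => x j.succ)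
  map_add' _ _ := rfl
  map_smul' _ _ := rfl

def firstL : E (n+1) →ₗ[ℝ] ℝ where
  toFun x := x 0
  map_add' _ _ := rfl
  map_smul' _ _ := rfl

variable (φ : E n →ₗᵢ[ℝ] E (n+1))

def Blin : E (n+1) →ₗ[ℝ] E (n+1) :=
  φ.toLinearMap.comp (tailL n) + (firstL n).smulRight (ones n)

lemma Blin_apply (x : E (n+1)) (i : Fin (n+1)) :
    Blin n φ x i = φ (WithLp.toLp 2 (fun j : Fin n => x j.succ)) i + x 0 := by
  simp [Blin, tailL, firstL, ones]
  rfl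

lemma sum_phi (hφ : Set.range φ = {x : E (n+1) | ∑ i, x i = 0}) (v : E n) :
    ∑ i, φ v i = 0 := by
  have : φ v ∈ Set.range φ := ⟨v, rfl⟩
  rw [hφ] at this
  exact this

lemma phi_dot (u v : E n) : ∑ i, φ u i * φ v i = ∑ j, u j * v j := by
  have h := φ.inner_map_map u v
  rw [PiLp.inner_apply, PiLp.inner_apply] at h
  simp only [RCLike.inner_apply, starRingEnd_apply, star_trivial] at h
  rw [Finset.sum_congr rfl (fun i _ => mul_comm (φ u i) (φ v i)),
    Finset.sum_congr rfl (fun j _ => mul_comm (u j) (v j))]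
  exact h

def bE (m : ℕ) : Module.Basis (Fin m) ℝ (E m) := (EuclideanSpace.basisFun (Fin m) ℝ).toBasis

lemma bE_coord (m : ℕ) (j i : Fin m) : bE m j i = if i = j then (1:ℝ) else 0 := by
  simp [bE, EuclideanSpace.basisFun_apply, EuclideanSpace.single_apply]

lemma Blin_basis_zero : Blin n φ (bE (n+1) 0) = ones n := by
  ext i
  rw [Blin_apply]
  have h1 : WithLp.toLp 2 (fun j : Fin n => bE (n+1) 0 j.succ) = (0 : E n) := by
    ext j; simp [bE_coord, Fin.succ_ne_zero]
  rw [h1, map_zero]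
  simp [bE_coord, ones]

lemma Blin_basis_succ (j : Fin n) : Blin n φ (bE (n+1) j.succ) = φ (bE n j) := by
  ext i
  rw [Blin_apply]
  have h1 : WithLp.toLp 2 (fun k : Fin n => bE (n+1) j.succ k.succ) = bE n j := by
    ext k; simp [bE_coord, Fin.succ_inj]
  rw [h1]
  have : bE (n+1) j.succ 0 = 0 := by simp [bE_coord, (Fin.succ_ne_zero j).symm]
  rw [this, add_zero]

lemma gram (hφ : Set.range φ = {x : E (n+1) | ∑ i, x i = 0}) :
    Matrix.transpose (LinearMap.toMatrix (bE (n+1)) (bE (n+1)) (Blin n φ)) *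
      (LinearMap.toMatrix (bE (n+1)) (bE (n+1)) (Blin n φ)) =
    Matrix.diagonal (fun i => if i = 0 then ((n:ℝ)+1) else 1) := by
  set M := LinearMap.toMatrix (bE (n+1)) (bE (n+1)) (Blin n φ) with hM
  have hMij : ∀ i j, M i j = Blin n φ (bE (n+1) j) i := by
    intro i j
    rw [hM, LinearMap.toMatrix_apply]
    rfl
  ext j k
  rw [Matrix.mul_apply]
  simp only [Matrix.transpose_apply]
  have key : ∀ i, M i j * M i k = Blin n φ (bE (n+1) j) i * Blin n φ (bE (n+1) k) i := by
    intro i; rw [hMij, hMij]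
  rw [Finset.sum_congr rfl (fun i _ => key i)]
  induction j using Fin.cases with
  | zero =>
    induction k using Fin.cases with
    | zero =>
      simp [Blin_basis_zero, ones, Matrix.diagonal]
    | succ k =>
      rw [Blin_basis_zero, Blin_basis_succ]
      simp only [ones, one_mul]
      rw [sum_phi n φ hφ]
      simp [Matrix.diagonal, (Fin.succ_ne_zero k).symm]
  | succ j =>
    induction k using Fin.cases with
    | zero =>
      rw [Blin_basis_zero, Blin_basis_succ]
      simp only [ones, mul_one]
      rw [sum_phi n φ hφ]
      simp [Matrix.diagonal, Fin.succ_ne_zero j]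
    | succ k =>
      rw [Blin_basis_succ, Blin_basis_succ, phi_dot]
      by_cases h : j = k
      · subst h
        simp [bE_coord, Matrix.diagonal, Fin.succ_ne_zero j]
      · have hsne : (j.succ : Fin (n+1)) ≠ k.succ := by simp [Fin.succ_inj, h]
        simp only [Matrix.diagonal, Matrix.of_apply]
        rw [if_neg hsne]
        rw [Finset.sum_eq_zero]
        intro i _
        rw [bE_coord, bE_coord]
        rcases eq_or_ne i j with rfl | h1
        · rw [if_pos rfl, if_neg (fun hc => h hc), one_mul]
        · rw [if_neg h1, zero_mul]

lemma det_sq (hφ : Set.range φ = {x : E (n+1) | ∑ i, x i = 0}) :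
    (LinearMap.det (Blin n φ))^2 = (n:ℝ)+1 := by
  set M := LinearMap.toMatrix (bE (n+1)) (bE (n+1)) (Blin n φ)
  have h1 : LinearMap.det (Blin n φ) = M.det := (LinearMap.det_toMatrix _ _).symm
  have h2 := congrArg Matrix.det (gram n φ hφ)
  rw [Matrix.det_mul, Matrix.det_transpose, Matrix.det_diagonal] at h2
  rw [h1, sq, h2]
  rw [Fin.prod_univ_succ]
  simp [Fin.succ_ne_zero]

lemma abs_det (hφ : Set.range φ = {x : E (n+1) | ∑ i, x i = 0}) :
    |LinearMap.det (Blin n φ)| = Real.sqrt ((n:ℝ)+1) := by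
  rw [← Real.sqrt_sq_eq_abs, det_sq n φ hφ]

lemma det_ne_zero (hφ : Set.range φ = {x : E (n+1) | ∑ i, x i = 0}) :
    LinearMap.det (Blin n φ) ≠ 0 := by
  intro h
  have := det_sq n φ hφ
  rw [h] at this
  simp at this
  nlinarith [this]

variable (c : ℝ)

def Gmap : E (n+1) → E (n+1) :=
  fun x => WithLp.toLp 2 (fun i => Real.exp (Blin n φ x i + Real.log c))

def Bc : E (n+1) →L[ℝ] E (n+1) := LinearMap.toContinuousLinearMap (Blin n φ)

def Dlin (z : E (n+1)) : E (n+1) →ₗ[ℝ] E (n+1) where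
  toFun w := WithLp.toLp 2 (fun i => z i * w i)
  map_add' w w' := by ext i; simp [mul_add]
  map_smul' a w := by ext i; simp [mul_left_comm]

def Gder (x : E (n+1)) : E (n+1) →L[ℝ] E (n+1) :=
  LinearMap.toContinuousLinearMap ((Dlin n (Gmap n φ c x)).comp (Blin n φ))

lemma Dlin_det (z : E (n+1)) : LinearMap.det (Dlin n z) = ∏ i, z i := by
  rw [← LinearMap.det_toMatrix (bE (n+1))]
  have h : LinearMap.toMatrix (bE (n+1)) (bE (n+1)) (Dlin n z) = Matrix.diagonal z := by
    ext i j
    rw [LinearMap.toMatrix_apply]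
    show z i * bE (n+1) j i = _
    rw [bE_coord]
    simp [Matrix.diagonal, eq_comm]
  rw [h, Matrix.det_diagonal]

lemma Gder_det (x : E (n+1)) :
    (Gder n φ c x).det
      = (∏ i, Real.exp (Blin n φ x i + Real.log c)) * LinearMap.det (Blin n φ) := by
  have h : (Gder n φ c x).det = LinearMap.det ((Dlin n (Gmap n φ c x)).comp (Blin n φ)) := rfl
  rw [h, LinearMap.det_comp, Dlin_det]
  rfl

def eqv (m : ℕ) : E m ≃L[ℝ] (Fin m → ℝ) := PiLp.continuousLinearEquiv 2 ℝ _

lemma hasFDeriv (x : E (n+1)) : HasFDerivAt (Gmap n φ c) (Gder n φ c x) x := by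
  have key : HasFDerivAt (fun y : E (n+1) => (fun i => Real.exp (Blin n φ y i + Real.log c) : Fin (n+1) → ℝ))
      ((eqv (n+1)).toContinuousLinearMap.comp (Gder n φ c x)) x := by
    apply hasFDerivAt_pi''
    intro i
    set P : E (n+1) →L[ℝ] ℝ :=
      (ContinuousLinearMap.proj i).comp ((eqv (n+1)).toContinuousLinearMap.comp (Bc n φ)) with hP
    have h1 : HasFDerivAt (fun y : E (n+1) => Blin n φ y i + Real.log c) P x := by
      have := P.hasFDerivAt (x := x)
      exact this.add_const _
    have h2 := h1.exp
    exact h2.congr_fderiv (ContinuousLinearMap.ext fun w => rfl)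
  have h3 := ((eqv (n+1)).symm.hasFDerivAt (x := (fun i => Real.exp (Blin n φ x i + Real.log c) : Fin (n+1) → ℝ))).comp x key
  have h5 : HasFDerivAt (Gmap n φ c)
      (((eqv (n+1)).symm.toContinuousLinearMap).comp
        ((eqv (n+1)).toContinuousLinearMap.comp (Gder n φ c x))) x := h3
  convert h5 using 1
  exact ContinuousLinearMap.ext fun w => rfl

lemma G_cont : Continuous (Gmap n φ c) :=
  continuous_iff_continuousAt.2 fun x => (hasFDeriv n φ c x).continuousAt

lemma G_inj (hφ : Set.range φ = {x : E (n+1) | ∑ i, x i = 0}) :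
    Function.Injective (Gmap n φ c) := by
  intro x y hxy
  have hB : Blin n φ x = Blin n φ y := by
    ext i
    have h : Real.exp (Blin n φ x i + Real.log c) = Real.exp (Blin n φ y i + Real.log c) :=
      congrArg (fun z => z i) hxy
    have h2 := Real.exp_injective h
    linarith
  have hdet := det_ne_zero n φ hφ
  set e := LinearMap.equivOfDetNeZero (Blin n φ) hdet with he
  have hcoe : ∀ v, e v = Blin n φ v := fun v => rfl
  apply e.injective
  rw [hcoe, hcoe] at *
  exact hB

lemma G_range (hφ : Set.range φ = {x : E (n+1) | ∑ i, x i = 0}) (hc : 0 < c) :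
    Set.range (Gmap n φ c) = {z : E (n+1) | ∀ i, 0 < z i} := by
  apply Set.eq_of_subset_of_subset
  · rintro z ⟨x, rfl⟩ i
    exact Real.exp_pos _
  · intro z hz
    have hdet := det_ne_zero n φ hφ
    set e := LinearMap.equivOfDetNeZero (Blin n φ) hdet with he
    have hcoe : ∀ v, e v = Blin n φ v := fun v => rfl
    refine ⟨e.symm (WithLp.toLp 2 (fun i => Real.log (z i) - Real.log c)), ?_⟩
    ext i
    show Real.exp (Blin n φ (e.symm _) i + Real.log c) = z i
    have : Blin n φ (e.symm (WithLp.toLp 2 (fun i => Real.log (z i) - Real.log c)))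
        = WithLp.toLp 2 (fun i => Real.log (z i) - Real.log c) := by
      rw [← hcoe, e.apply_symm_apply]
    rw [this]
    show Real.exp (Real.log (z i) - Real.log c + Real.log c) = z i
    rw [sub_add_cancel, Real.exp_log (hz i)]

def ell : E (n+1) ≃ᵐ (E n × ℝ) :=
  ((((MeasurableEquiv.toLp 2 (Fin (n+1) → ℝ)).symm.trans
      (MeasurableEquiv.piFinSuccAbove (fun _ : Fin (n+1) => ℝ) 0)).trans
    (MeasurableEquiv.prodComm : ℝ × (Fin n → ℝ) ≃ᵐ (Fin n → ℝ) × ℝ)).trans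
    (MeasurableEquiv.prodCongr (MeasurableEquiv.toLp 2 (Fin n → ℝ)).symm.symm
      (MeasurableEquiv.refl ℝ)))

lemma ell_apply (x : E (n+1)) :
    ell n x = ((WithLp.toLp 2 (fun j => x ((0:Fin (n+1)).succAbove j)) : E n), x 0) := by rfl

lemma ell_mp : MeasurePreserving (ell n) volume volume := by
  have h1 := EuclideanSpace.volume_preserving_symm_measurableEquiv_toLp (Fin (n+1))
  have h2 := MeasureTheory.volume_preserving_piFinSuccAbove (fun _ : Fin (n+1) => ℝ) 0
  have h3 : MeasurePreserving (MeasurableEquiv.prodComm : ℝ × (Fin n → ℝ) ≃ᵐ (Fin n → ℝ) × ℝ)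
      volume volume := MeasureTheory.Measure.measurePreserving_swap
  have h4 : MeasurePreserving
      (MeasurableEquiv.prodCongr (MeasurableEquiv.toLp 2 (Fin n → ℝ)).symm.symm
        (MeasurableEquiv.refl ℝ)) volume volume :=
    ((EuclideanSpace.volume_preserving_symm_measurableEquiv_toLp (Fin n)).symm).prod
      (MeasurePreserving.id _)
  exact ((h4.comp h3).comp h2).comp h1

theorem main (n : ℕ) (lam : ℝ) (hlam : 0 < lam)
    (φ : E n →ₗᵢ[ℝ] E (n+1))
    (hφ : Set.range φ = {x : E (n+1) | ∑ i, x i = 0})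
    (F : E n × ℝ → E (n+1))
    (hF : ∀ v h i, F (v, h) i = lam ^ (-(1:ℝ)/((n:ℝ)+1)) * Real.exp h * Real.exp (φ v i)) :
    Measure.map F (volume.withDensity
        (fun p : E n × ℝ =>
          ENNReal.ofReal (Real.sqrt ((n:ℝ)+1) * Real.exp (((n:ℝ)+1) * p.2))))
      = ENNReal.ofReal lam • volume.restrict {z : E (n+1) | ∀ i, 0 < z i} := by
  set c := lam ^ (-(1:ℝ)/((n:ℝ)+1)) with hcdef
  have hc0 : 0 < c := Real.rpow_pos_of_pos hlam _
  have hne : ((n:ℝ)+1) ≠ 0 := by positivity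
  have hlogc : ((n:ℝ)+1) * Real.log c = - Real.log lam := by
    rw [hcdef, Real.log_rpow hlam]
    field_simp
  have hFG : ∀ x, F (ell n x) = Gmap n φ c x := by
    intro x
    ext i
    rw [ell_apply, hF]
    show c * Real.exp (x 0) * Real.exp (φ (WithLp.toLp 2 (fun j => x ((0:Fin (n+1)).succAbove j))) i)
      = Real.exp (Blin n φ x i + Real.log c)
    rw [Blin_apply]
    have htail : (fun j : Fin n => x j.succ) = (fun j => x ((0:Fin (n+1)).succAbove j)) := by
      funext j; rw [Fin.zero_succAbove]
    rw [← htail, Real.exp_add, Real.exp_add, Real.exp_log hc0]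
    ring
  have hGmeas : Measurable (Gmap n φ c) := (G_cont n φ c).measurable
  have hFeq : F = Gmap n φ c ∘ (ell n).symm := by
    funext p
    have h := hFG ((ell n).symm p)
    rw [MeasurableEquiv.apply_symm_apply] at h
    exact h
  have hFmeas : Measurable F := by
    rw [hFeq]; exact hGmeas.comp (ell n).symm.measurable
  set ρ : E n × ℝ → ENNReal :=
    fun p => ENNReal.ofReal (Real.sqrt ((n:ℝ)+1) * Real.exp (((n:ℝ)+1) * p.2)) with hρ
  have hρmeas : Measurable ρ := by
    apply Measurable.ennreal_ofReal
    exact measurable_const.mul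
      ((Real.continuous_exp.comp (continuous_const.mul continuous_snd)).measurable)
  have e1 : volume.withDensity ρ
      = Measure.map (ell n) (volume.withDensity (fun x => ρ (ell n x))) := by
    rw [aux_map_withDensity (ell n) volume ρ hρmeas, (ell_mp n).map_eq]
  rw [e1, Measure.map_map hFmeas (ell n).measurable]
  have e2 : F ∘ (ell n) = Gmap n φ c := funext hFG
  rw [e2]
  have hprod : ∀ x : E (n+1), (∏ i, Real.exp (Blin n φ x i + Real.log c))
      = Real.exp (((n:ℝ)+1) * x 0) * lam⁻¹ := by
    intro x
    rw [← Real.exp_sum]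
    have hsum : ∑ i, (Blin n φ x i + Real.log c)
        = ((n:ℝ)+1) * x 0 + ((n:ℝ)+1) * Real.log c := by
      rw [Finset.sum_add_distrib]
      congr 1
      · rw [Finset.sum_congr rfl (fun i _ => Blin_apply n φ x i), Finset.sum_add_distrib,
            sum_phi n φ hφ, Finset.sum_const, Finset.card_univ, zero_add]
        simp only [Fintype.card_fin, nsmul_eq_mul]
        push_cast
        ring
      · rw [Finset.sum_const, Finset.card_univ]
        simp only [Fintype.card_fin, nsmul_eq_mul]
        push_cast
        ring
    rw [hsum, hlogc, Real.exp_add, Real.exp_neg, Real.exp_log hlam]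
  have hdens : (fun x => ρ (ell n x)) =
      fun x => ENNReal.ofReal lam * ENNReal.ofReal |(Gder n φ c x).det| := by
    funext x
    show ENNReal.ofReal (Real.sqrt ((n:ℝ)+1) * Real.exp (((n:ℝ)+1) * x 0)) = _
    rw [Gder_det n φ c x, abs_mul, abs_det n φ hφ, hprod x,
        abs_of_pos (by positivity : (0:ℝ) < Real.exp (((n:ℝ)+1) * x 0) * lam⁻¹),
        ← ENNReal.ofReal_mul hlam.le]
    congr 1
    field_simp
  rw [hdens]
  have hmeas2 : Measurable fun x => ENNReal.ofReal |(Gder n φ c x).det| := by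
    apply Measurable.ennreal_ofReal
    apply Measurable.abs
    have h : (fun x => (Gder n φ c x).det)
        = fun x => (∏ i, Real.exp (Blin n φ x i + Real.log c)) * LinearMap.det (Blin n φ) :=
      funext fun x => Gder_det n φ c x
    rw [h]
    apply Measurable.mul_const
    apply Finset.measurable_prod
    intro i _
    apply Measurable.exp
    apply Measurable.add_const
    exact (EuclideanSpace.proj i : E (n+1) →L[ℝ] ℝ).continuous.measurable.comp (Bc n φ).continuous.measurable
  have e3 : volume.withDensity
        (fun x => ENNReal.ofReal lam * ENNReal.ofReal |(Gder n φ c x).det|)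
      = ENNReal.ofReal lam •
          volume.withDensity (fun x => ENNReal.ofReal |(Gder n φ c x).det|) := by
    rw [← withDensity_smul _ hmeas2]
    rfl
  rw [e3, Measure.map_smul]
  congr 1
  have hcv := map_withDensity_abs_det_fderiv_eq_addHaar (volume : Measure (E (n+1)))
      MeasurableSet.univ.nullMeasurableSet
      (fun x _ => (hasFDeriv n φ c x).hasFDerivWithinAt) ((G_inj n φ c hφ).injOn)
  rw [Measure.restrict_univ, Set.image_univ, G_range n φ c hφ hc0] at hcv
  exact hcv

end S14

/-- Let `φ : ℝ^{d−1} → ℝ^d` be a linear isometry with range the hyperplane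
`V = {x : ∑ i, x i = 0}`, and let `F(v,h) = λ^{-1/d} e^h e^{φ(v)}` be the inverse
scaling transform expressed in orthonormal coordinates of `V`.  Then the pushforward
under `F` of the measure with density `√d · e^{dh}` on `ℝ^{d−1} × ℝ` equals `λ` times
Lebesgue measure restricted to the positive orthant `(0,∞)^d`. -/
theorem statement14 (d : ℕ) (hd : 2 ≤ d) (lam : ℝ) (hlam : 0 < lam)
    (φ : EuclideanSpace ℝ (Fin (d - 1)) →ₗᵢ[ℝ] EuclideanSpace ℝ (Fin d))
    (hφ : Set.range φ = {x : EuclideanSpace ℝ (Fin d) | ∑ i, x i = 0})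
    (F : EuclideanSpace ℝ (Fin (d - 1)) × ℝ → EuclideanSpace ℝ (Fin d))
    (hF : ∀ v h i, F (v, h) i =
      lam ^ (-(1 : ℝ) / (d : ℝ)) * Real.exp h * Real.exp (φ v i)) :
    MeasureTheory.Measure.map F
        (MeasureTheory.volume.withDensity
          (fun p : EuclideanSpace ℝ (Fin (d - 1)) × ℝ =>
            ENNReal.ofReal (Real.sqrt d * Real.exp (d * p.2)))) =
      ENNReal.ofReal lam •
        MeasureTheory.volume.restrict {z : EuclideanSpace ℝ (Fin d) | ∀ i, 0 < z i} := by
  obtain ⟨n, rfl⟩ : ∃ n, d = n + 1 := ⟨d - 1, by omega⟩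
  have hF' : ∀ (v : S14.E n) (h : ℝ) (i : Fin (n+1)), F (v, h) i =
      lam ^ (-(1:ℝ)/((n:ℝ)+1)) * Real.exp h * Real.exp (φ v i) := by
    intro v h i
    have := hF v h i
    rwa [show (((n+1 : ℕ)) : ℝ) = (n:ℝ)+1 by push_cast; ring] at this
  have main := S14.main n lam hlam φ hφ F hF'
  have hcast : (((n+1 : ℕ)) : ℝ) = (n:ℝ)+1 := by push_cast; ring
  simp only [Nat.cast_add, Nat.cast_one]
  exact main
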